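/- Let k be a field and A a k-algebra. Suppose there exists an algebraic Galois extension K/k such that K ⊗_k A is a noetherian unique factorization domain whose group of units equals K^*. Then A is a noetherian unique factorization domain and A^* = k^*. -/

import Mathlib

open TensorProduct

section AuxUFD19

variable {k K A : Type*} [Field k] [Field K] [Algebra k K] [CommRing A] [Algebra k A]

lemma exists_lam_aux19 (k K : Type*) [Field k] [Field K] [Algebra k K] :
    ∃ lam : K →ₗ[k] k, lam 1 = 1 := by
  classical
  let γ := Module.Basis.ofVectorSpace k K
  have h1 : γ.repr 1 ≠ 0 := by
    intro h
    have := γ.repr.injective (a₁ := 1) (a₂ := 0) (by simp [h])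
    exact one_ne_zero this
  obtain ⟨j, hj⟩ : ∃ j, γ.repr 1 j ≠ 0 := by
    by_contra hc
    push_neg at hc
    exact h1 (Finsupp.ext fun j => hc j)
  refine ⟨(γ.repr 1 j)⁻¹ • γ.coord j, ?_⟩
  simp [Module.Basis.coord_apply, inv_mul_cancel₀ hj]

lemma exists_proj_aux19 (k K A : Type*) [Field k] [Field K] [Algebra k K]
    [CommRing A] [Algebra k A] :
    ∃ Λ : (K ⊗[k] A) →ₗ[k] A,
      (∀ (x : A) (y : K ⊗[k] A), Λ ((1 ⊗ₜ[k] x) * y) = x * Λ y) ∧ Λ 1 = 1 := by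
  obtain ⟨lam, hlam⟩ := exists_lam_aux19 k K
  refine ⟨(TensorProduct.lid k A).toLinearMap ∘ₗ TensorProduct.map lam LinearMap.id, ?_, ?_⟩
  · intro x y
    induction y using TensorProduct.induction_on with
    | zero => simp
    | tmul c a =>
        simp only [Algebra.TensorProduct.tmul_mul_tmul, one_mul, LinearMap.coe_comp,
          LinearEquiv.coe_coe, Function.comp_apply, TensorProduct.map_tmul, LinearMap.id_coe,
          id_eq, TensorProduct.lid_tmul]
        rw [mul_smul_comm]
    | add y z hy hz =>
        rw [mul_add, map_add, map_add, hy, hz, mul_add]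
  · rw [Algebra.TensorProduct.one_def]
    simp [hlam]

lemma mem_of_incl_mem_aux19 (I : Ideal A) (x : A)
    (hx : (1 ⊗ₜ[k] x : K ⊗[k] A) ∈
      Ideal.map (Algebra.TensorProduct.includeRight : A →ₐ[k] K ⊗[k] A) I) :
    x ∈ I := by
  obtain ⟨Λ, hΛ, hΛ1⟩ := exists_proj_aux19 k K A
  have main : ∀ z ∈ Ideal.map (Algebra.TensorProduct.includeRight : A →ₐ[k] K ⊗[k] A) I,
      ∀ b : K ⊗[k] A, Λ (b * z) ∈ I := by
    intro z hz
    have hz' : z ∈ Submodule.span (K ⊗[k] A)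
        ((Algebra.TensorProduct.includeRight : A →ₐ[k] K ⊗[k] A) '' I) := hz
    refine Submodule.span_induction
      (p := fun z _ => ∀ b : K ⊗[k] A, Λ (b * z) ∈ I) ?_ ?_ ?_ ?_ hz'
    · rintro _ ⟨i, hi, rfl⟩ b
      rw [Algebra.TensorProduct.includeRight_apply, mul_comm, hΛ]
      exact I.mul_mem_right _ hi
    · intro b; simp
    · intro y z _ _ hy hz b
      rw [mul_add, map_add]
      exact I.add_mem (hy b) (hz b)
    · intro b' z _ hz b
      rw [smul_eq_mul, ← mul_assoc]
      exact hz (b * b')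
  have h := main _ hx 1
  rwa [one_mul, ← mul_one ((1 : K) ⊗ₜ[k] x), hΛ, hΛ1, mul_one] at h

lemma incl_injective_aux19 :
    Function.Injective (Algebra.TensorProduct.includeRight : A →ₐ[k] K ⊗[k] A) := by
  obtain ⟨Λ, hΛ, hΛ1⟩ := exists_proj_aux19 k K A
  have key : ∀ a : A, Λ ((Algebra.TensorProduct.includeRight : A →ₐ[k] K ⊗[k] A) a) = a := by
    intro a
    rw [Algebra.TensorProduct.includeRight_apply, ← mul_one ((1 : K) ⊗ₜ[k] a), hΛ, hΛ1, mul_one]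
  intro a b hab
  rw [← key a, ← key b, hab]

lemma dvd_of_incl_dvd_aux19 (x y : A)
    (h : (1 ⊗ₜ[k] x : K ⊗[k] A) ∣ 1 ⊗ₜ[k] y) : x ∣ y := by
  have hmem : (1 ⊗ₜ[k] y : K ⊗[k] A) ∈
      Ideal.map (Algebra.TensorProduct.includeRight : A →ₐ[k] K ⊗[k] A) (Ideal.span {x}) := by
    rw [Ideal.map_span, Set.image_singleton, Algebra.TensorProduct.includeRight_apply]
    exact Ideal.mem_span_singleton.2 h
  exact Ideal.mem_span_singleton.1 (mem_of_incl_mem_aux19 _ _ hmem)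

lemma isNoetherianRing_aux19 [IsNoetherianRing (K ⊗[k] A)] : IsNoetherianRing A := by
  let φ : A →ₐ[k] K ⊗[k] A := Algebra.TensorProduct.includeRight
  have hcm : ∀ I : Ideal A, Ideal.comap φ (Ideal.map φ I) = I := by
    intro I
    refine le_antisymm (fun x hx => ?_) Ideal.le_comap_map
    exact mem_of_incl_mem_aux19 I x hx
  have hsm : StrictMono (fun I : Ideal A => Ideal.map φ I) := by
    intro I J hIJ
    refine lt_of_le_of_ne (Ideal.map_mono hIJ.le) (fun h => hIJ.ne ?_)
    rw [← hcm I, ← hcm J]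
    simp only at h
    rw [h]
  rw [isNoetherianRing_iff, isNoetherian_iff']
  have : WellFoundedGT (Ideal (K ⊗[k] A)) :=
    (isNoetherianRing_iff.mp ‹IsNoetherianRing (K ⊗[k] A)›).wellFoundedGT
  exact hsm.wellFoundedGT

lemma fixed_mem_range_aux19 [IsGalois k K] (c : K)
    (h : ∀ σ : K ≃ₐ[k] K, σ c = c) : c ∈ (algebraMap k K).range := by
  have halg : Algebra.IsAlgebraic k K := inferInstance
  have hint : IsIntegral k c := (Algebra.IsAlgebraic.isAlgebraic c).isIntegral
  rw [← minpoly.natDegree_eq_one_iff]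
  have hsplit : ((minpoly k c).map (algebraMap k K)).Splits := Normal.splits inferInstance c
  have hsep : (minpoly k c).Separable := Algebra.IsSeparable.isSeparable k c
  have hcard : (minpoly k c).natDegree = ((minpoly k c).map (algebraMap k K)).roots.card := by
    rw [← Polynomial.natDegree_map (algebraMap k K)]; exact hsplit.natDegree_eq_card_roots
  have hroots : ∀ x ∈ ((minpoly k c).map (algebraMap k K)).roots, x = c := by
    intro x hx
    have hx0 : Polynomial.aeval x (minpoly k c) = 0 := by
      have := Polynomial.isRoot_of_mem_roots hx
      rwa [Polynomial.IsRoot, Polynomial.eval_map, ← Polynomial.aeval_def] at this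
    obtain ⟨σ, hσ⟩ := minpoly.exists_algEquiv_of_root' (Algebra.IsAlgebraic.isAlgebraic c) hx0
    rw [h σ] at hσ
    exact hσ.symm
  have hnodup : ((minpoly k c).map (algebraMap k K)).roots.Nodup :=
    Polynomial.nodup_roots (hsep.map)
  have h1 : ((minpoly k c).map (algebraMap k K)).roots.card ≤ 1 := by
    classical
    have hsub : ((minpoly k c).map (algebraMap k K)).roots.toFinset ⊆ {c} := by
      intro x hx
      simp only [Multiset.mem_toFinset] at hx
      simp [hroots x hx]
    calc ((minpoly k c).map (algebraMap k K)).roots.card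
        = ((minpoly k c).map (algebraMap k K)).roots.toFinset.card := by
          rw [Multiset.toFinset_card_of_nodup hnodup]
      _ ≤ ({c} : Finset K).card := Finset.card_le_card hsub
      _ = 1 := Finset.card_singleton c
  have h2 : 1 ≤ (minpoly k c).natDegree := minpoly.natDegree_pos hint
  omega

lemma repr_congr_aux19 {ι : Type*} (e : Module.Basis ι k A) (σ : K ≃ₐ[k] K) (x : K ⊗[k] A) (i : ι) :
    (e.baseChange K).repr ((Algebra.TensorProduct.congr σ (AlgEquiv.refl (R := k) (A₁ := A))) x) i
      = σ ((e.baseChange K).repr x i) := by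
  induction x using TensorProduct.induction_on with
  | zero => simp
  | tmul c a =>
      rw [Algebra.TensorProduct.congr_apply, Algebra.TensorProduct.map_tmul]
      simp only [AlgEquiv.coe_algHom, AlgEquiv.coe_refl, id_eq, Module.Basis.baseChange_repr_tmul]
      rw [map_smul]
  | add y z hy hz => simp only [map_add, Finsupp.add_apply, hy, hz]

lemma congr_incl_aux19 (σ : K ≃ₐ[k] K) (a : A) :
    Algebra.TensorProduct.congr σ (AlgEquiv.refl (R := k) (A₁ := A)) ((1 : K) ⊗ₜ[k] a)
      = (1 : K) ⊗ₜ[k] a := by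
  rw [Algebra.TensorProduct.congr_apply, Algebra.TensorProduct.map_tmul]
  simp

lemma mem_range_incl_aux19 {ι : Type*} (e : Module.Basis ι k A) (x : K ⊗[k] A)
    (hx : ∀ i, (e.baseChange K).repr x i ∈ (algebraMap k K).range) :
    ∃ a : A, x = (1 : K) ⊗ₜ[k] a := by
  classical
  have hmem : x ∈ LinearMap.range
      ((Algebra.TensorProduct.includeRight : A →ₐ[k] K ⊗[k] A).toLinearMap) := by
    have hx' : x = Finsupp.linearCombination K (⇑(e.baseChange K)) ((e.baseChange K).repr x) :=
      ((e.baseChange K).linearCombination_repr x).symm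
    rw [hx', Finsupp.linearCombination_apply, Finsupp.sum]
    apply Submodule.sum_mem
    intro i _
    obtain ⟨t, ht⟩ := hx i
    refine ⟨t • e i, ?_⟩
    rw [AlgHom.toLinearMap_apply, Algebra.TensorProduct.includeRight_apply,
      Module.Basis.baseChange_apply, TensorProduct.tmul_smul, ← algebraMap_smul K t, ht]
  obtain ⟨a, ha⟩ := hmem
  exact ⟨a, by rw [← ha]; rfl⟩

lemma assoc_incl_aux19 [IsGalois k K] (d : K ⊗[k] A) (hd0 : d ≠ 0)
    (hd : ∀ σ : K ≃ₐ[k] K, ∃ c : K,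
      Algebra.TensorProduct.congr σ (AlgEquiv.refl (R := k) (A₁ := A)) d = c • d) :
    ∃ a : A, Associated d ((1 : K) ⊗ₜ[k] a) := by
  classical
  set e := Module.Basis.ofVectorSpace k A with he
  set bB := e.baseChange K with hbB
  obtain ⟨i0, hi0⟩ : ∃ i, bB.repr d i ≠ 0 := by
    by_contra hc
    push_neg at hc
    exact hd0 (bB.repr.injective (by ext j; simp [hc j]))
  set r : K := bB.repr d i0 with hrdef
  have hco : ∀ σ : K ≃ₐ[k] K, ∃ c : K, ∀ j, σ (bB.repr d j) = c * bB.repr d j := by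
    intro σ
    obtain ⟨c, hc⟩ := hd σ
    refine ⟨c, fun j => ?_⟩
    rw [← repr_congr_aux19 e σ d j, hc, map_smul, Finsupp.smul_apply, smul_eq_mul]
  have hfix : ∀ i, ∀ σ : K ≃ₐ[k] K, σ (r⁻¹ * bB.repr d i) = r⁻¹ * bB.repr d i := by
    intro i σ
    obtain ⟨c, hc⟩ := hco σ
    have hc0 : c ≠ 0 := by
      intro h0
      apply hi0
      have h1 := hc i0
      rw [h0, zero_mul] at h1
      have := congrArg σ.symm h1
      rwa [AlgEquiv.symm_apply_apply, map_zero] at this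
    rw [map_mul, map_inv₀, hc i, hc i0, mul_inv]
    field_simp
    rw [← hrdef, mul_div_assoc, div_self hi0, mul_one]
  have hrange : ∀ i, bB.repr (r⁻¹ • d) i ∈ (algebraMap k K).range := by
    intro i
    rw [map_smul, Finsupp.smul_apply, smul_eq_mul]
    exact fixed_mem_range_aux19 _ (fun σ => hfix i σ)
  obtain ⟨a, ha⟩ := mem_range_incl_aux19 e _ hrange
  refine ⟨a, Units.map (algebraMap K (K ⊗[k] A)).toMonoidHom (Units.mk0 r⁻¹ (inv_ne_zero hi0)), ?_⟩
  show d * algebraMap K (K ⊗[k] A) r⁻¹ = (1 : K) ⊗ₜ[k] a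
  rw [mul_comm, ← Algebra.smul_def, ← ha]

lemma congr_symm_cancel_aux19 (σ : K ≃ₐ[k] K) (x : K ⊗[k] A) :
    Algebra.TensorProduct.congr σ (AlgEquiv.refl (R := k) (A₁ := A))
      (Algebra.TensorProduct.congr σ.symm (AlgEquiv.refl (R := k) (A₁ := A)) x) = x := by
  induction x using TensorProduct.induction_on with
  | zero => simp
  | tmul c a =>
      rw [Algebra.TensorProduct.congr_apply (f := σ.symm), Algebra.TensorProduct.map_tmul,
        Algebra.TensorProduct.congr_apply, Algebra.TensorProduct.map_tmul]
      simp
  | add y z hy hz => simp only [map_add, hy, hz]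

end AuxUFD19

/-- Galois descent of the UFD property: let `k` be a field, `A` a `k`-algebra, and
`K/k` an algebraic Galois extension such that `K ⊗_k A` is a noetherian unique
factorization domain with `(K ⊗_k A)^* = K^*`.  Then `A` is a noetherian unique
factorization domain with `A^* = k^*`. -/
theorem stmt19 {k K A : Type*} [Field k] [Field K] [Algebra k K] [IsGalois k K]
    [CommRing A] [Algebra k A]
    [IsDomain (K ⊗[k] A)] [IsNoetherianRing (K ⊗[k] A)]
    [UniqueFactorizationMonoid (K ⊗[k] A)]
    (hunits : ∀ u : (K ⊗[k] A)ˣ, ∃ c : K, (u : K ⊗[k] A) = algebraMap K (K ⊗[k] A) c) :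
    IsDomain A ∧ IsNoetherianRing A ∧
    (∀ [_inst : IsDomain A], UniqueFactorizationMonoid A) ∧
    (∀ u : Aˣ, ∃ c : k, (u : A) = algebraMap k A c) := by
  classical
  let φ : A →ₐ[k] K ⊗[k] A := Algebra.TensorProduct.includeRight
  have hinj : Function.Injective φ := incl_injective_aux19
  haveI hdom : IsDomain A := Function.Injective.isDomain φ.toRingHom hinj
  haveI hnoe : IsNoetherianRing A := isNoetherianRing_aux19 (k := k) (K := K)
  letI : GCDMonoid (K ⊗[k] A) := UniqueFactorizationMonoid.toGCDMonoid _
  have hincl : ∀ a : A, φ a = (1 : K) ⊗ₜ[k] a := fun a => rfl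
  have hprime : ∀ p : A, Irreducible p → Prime p := by
    intro p hp
    have hpB : ((1 : K) ⊗ₜ[k] p : K ⊗[k] A) ≠ 0 := by
      intro h
      exact hp.ne_zero (hinj (by rw [hincl, h, map_zero]))
    refine ⟨hp.ne_zero, hp.not_isUnit, ?_⟩
    intro a b hab
    by_cases hd : IsUnit (gcd ((1 : K) ⊗ₜ[k] p) ((1 : K) ⊗ₜ[k] a) : K ⊗[k] A)
    · right
      have h1 : ((1 : K) ⊗ₜ[k] p : K ⊗[k] A) ∣ ((1 : K) ⊗ₜ[k] a) * ((1 : K) ⊗ₜ[k] b) := by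
        rw [Algebra.TensorProduct.tmul_mul_tmul, one_mul]
        rw [← hincl, ← hincl]
        exact map_dvd φ hab
      have h2 := UniqueFactorizationMonoid.dvd_of_dvd_mul_right_of_no_prime_factors hpB
        (fun {q} hq1 hq2 hqp => hqp.not_unit (isUnit_of_dvd_unit (dvd_gcd hq1 hq2) hd)) h1
      exact dvd_of_incl_dvd_aux19 p b h2
    · set d := (gcd ((1 : K) ⊗ₜ[k] p) ((1 : K) ⊗ₜ[k] a) : K ⊗[k] A) with hddef
      have hdp : d ∣ (1 : K) ⊗ₜ[k] p := gcd_dvd_left _ _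
      have hda : d ∣ (1 : K) ⊗ₜ[k] a := gcd_dvd_right _ _
      have hd0 : d ≠ 0 := by
        intro h
        rw [hddef] at h
        exact hpB ((gcd_eq_zero_iff _ _).mp h).1
      have hsemi : ∀ σ : K ≃ₐ[k] K, ∃ c : K,
          Algebra.TensorProduct.congr σ (AlgEquiv.refl (R := k) (A₁ := A)) d = c • d := by
        intro σ
        have hdvd1 : (Algebra.TensorProduct.congr σ (AlgEquiv.refl (R := k) (A₁ := A))) d ∣ d := by
          refine dvd_gcd ?_ ?_
          · have := map_dvd (Algebra.TensorProduct.congr σ (AlgEquiv.refl (R := k) (A₁ := A))) hdp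
            rwa [congr_incl_aux19] at this
          · have := map_dvd (Algebra.TensorProduct.congr σ (AlgEquiv.refl (R := k) (A₁ := A))) hda
            rwa [congr_incl_aux19] at this
        have hdvd2 : d ∣ (Algebra.TensorProduct.congr σ (AlgEquiv.refl (R := k) (A₁ := A))) d := by
          have h1 : (Algebra.TensorProduct.congr σ.symm (AlgEquiv.refl (R := k) (A₁ := A))) d ∣ d := by
            refine dvd_gcd ?_ ?_
            · have := map_dvd (Algebra.TensorProduct.congr σ.symm (AlgEquiv.refl (R := k) (A₁ := A))) hdp
              rwa [congr_incl_aux19] at this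
            · have := map_dvd (Algebra.TensorProduct.congr σ.symm (AlgEquiv.refl (R := k) (A₁ := A))) hda
              rwa [congr_incl_aux19] at this
          have h2 := map_dvd (Algebra.TensorProduct.congr σ (AlgEquiv.refl (R := k) (A₁ := A))) h1
          rwa [congr_symm_cancel_aux19] at h2
        obtain ⟨u, hu⟩ := associated_of_dvd_dvd hdvd2 hdvd1
        obtain ⟨c, hc⟩ := hunits u
        exact ⟨c, by rw [← hu, hc, mul_comm, ← Algebra.smul_def]⟩
      obtain ⟨a0, hassoc⟩ := assoc_incl_aux19 d hd0 hsemi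
      have ha0p : a0 ∣ p := dvd_of_incl_dvd_aux19 a0 p (hassoc.symm.dvd.trans hdp)
      obtain ⟨f, hf⟩ := ha0p
      rcases hp.isUnit_or_isUnit hf with h | h
      · exact absurd (hassoc.symm.isUnit (by rw [← hincl]; exact h.map φ)) hd
      · left
        have h2 : Associated a0 p := ⟨h.unit, by rw [IsUnit.unit_spec, ← hf]⟩
        have h3 : ((1 : K) ⊗ₜ[k] p : K ⊗[k] A) ∣ (1 : K) ⊗ₜ[k] a := by
          have h4 : Associated ((1 : K) ⊗ₜ[k] a0 : K ⊗[k] A) ((1 : K) ⊗ₜ[k] p) := by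
            rw [← hincl, ← hincl]
            exact h2.map φ
          exact (h4.symm.trans hassoc.symm).dvd.trans hda
        exact dvd_of_incl_dvd_aux19 p a h3
  refine ⟨hdom, hnoe, ?_, ?_⟩
  · intro _
    exact { (inferInstance : WfDvdMonoid A) with
      irreducible_iff_prime := fun {a} => ⟨hprime a, Prime.irreducible⟩ }
  · intro u
    have hu := hunits (Units.map φ.toRingHom.toMonoidHom u)
    obtain ⟨c, hc⟩ := hu
    set e := Module.Basis.ofVectorSpace k A with he
    set bB := e.baseChange K with hbB
    have hrepr : ∀ i, algebraMap k K (e.repr (↑u : A) i) = c * algebraMap k K (e.repr 1 i) := by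
      intro i
      have h2 : algebraMap K (K ⊗[k] A) c = c • ((1 : K) ⊗ₜ[k] (1 : A)) := by
        rw [Algebra.algebraMap_eq_smul_one, Algebra.TensorProduct.one_def]
      have heq : ((1 : K) ⊗ₜ[k] (↑u : A) : K ⊗[k] A) = c • ((1 : K) ⊗ₜ[k] (1 : A)) := by
        rw [← h2, ← hc]
        rfl
      have hL : bB.repr ((1 : K) ⊗ₜ[k] (↑u : A)) i = algebraMap k K (e.repr (↑u : A) i) := by
        rw [hbB, Module.Basis.baseChange_repr_tmul, Algebra.smul_def, mul_one]
      have hR : bB.repr (c • ((1 : K) ⊗ₜ[k] (1 : A))) i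
          = c * algebraMap k K (e.repr (1 : A) i) := by
        rw [map_smul, Finsupp.smul_apply, smul_eq_mul, hbB, Module.Basis.baseChange_repr_tmul,
          Algebra.smul_def, mul_one]
      rw [← hL, ← hR, heq]
    obtain ⟨i0, hi0⟩ : ∃ i, e.repr 1 i ≠ 0 := by
      by_contra hcon
      push_neg at hcon
      have : e.repr 1 = 0 := Finsupp.ext fun j => hcon j
      exact one_ne_zero (e.repr.injective (by simp [this]))
    refine ⟨e.repr (↑u : A) i0 / e.repr 1 i0, ?_⟩
    have hne : algebraMap k K (e.repr 1 i0) ≠ 0 :=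
      fun h => hi0 ((algebraMap k K).injective (by rw [h, map_zero]))
    have hcval : c = algebraMap k K (e.repr (↑u : A) i0 / e.repr 1 i0) := by
      rw [map_div₀, eq_div_iff hne]
      exact (hrepr i0).symm
    apply hinj
    rw [hincl]
    have : ((1 : K) ⊗ₜ[k] (↑u : A) : K ⊗[k] A) = algebraMap K (K ⊗[k] A) c := hc
    rw [this, hcval, ← IsScalarTower.algebraMap_apply k K (K ⊗[k] A)]
    exact (φ.commutes _).symm
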